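/- (Single rank-1 POVM uncertainty relation for mixed states) For any density operator ρ and any rank-1 POVM N = {N_j} on a finite-dimensional Hilbert space, H(N) ≥ log[1/√(r(N,N))] + S(ρ), where H(N) = H({Tr(N_j ρ)}) and r(N,N) = max_{j,k}‖√N_j √N_k‖_∞². -/

import Mathlib

open scoped Kronecker ComplexOrder
open Matrix

noncomputable section

variable {n : Type*} [Fintype n] [DecidableEq n]

/-- Apply a real function to a (Hermitian) matrix via the spectral theorem. -/
def matFun (f : ℝ → ℝ) (A : Matrix n n ℂ) : Matrix n n ℂ :=
  if h : A.IsHermitian then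
    (h.eigenvectorUnitary : Matrix n n ℂ) *
      Matrix.diagonal (fun i => (f (h.eigenvalues i) : ℂ)) *
      (star (h.eigenvectorUnitary : Matrix n n ℂ))
  else 0

/-- Matrix logarithm (on the support; `log 0 = 0` in `Real.log`). -/
def matLog : Matrix n n ℂ → Matrix n n ℂ := matFun Real.log

/-- Matrix square root via the spectral theorem. -/
def matSqrt : Matrix n n ℂ → Matrix n n ℂ := matFun Real.sqrt

/-- Von Neumann entropy `S(ρ) = -Tr(ρ log ρ)`. -/
def vN (ρ : Matrix n n ℂ) : ℝ := -(Matrix.trace (ρ * matLog ρ)).re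

/-- Quantum relative entropy `S(A‖B) = Tr(A log A) - Tr(A log B)`. -/
def relEnt (A B : Matrix n n ℂ) : ℝ :=
  (Matrix.trace (A * matLog A)).re - (Matrix.trace (A * matLog B)).re

/-- Shannon entropy of a probability vector. -/
def shannon {ι : Type*} [Fintype ι] (p : ι → ℝ) : ℝ := -∑ j, p j * Real.log (p j)

/-- Largest eigenvalue of a Hermitian matrix. -/
def maxEig (A : Matrix n n ℂ) : ℝ :=
  if h : A.IsHermitian then ⨆ i, h.eigenvalues i else 0

/-- Squared operator (sup) norm `‖A‖_∞² = λmax(AᴴA)`. -/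
def opNormSq (A : Matrix n n ℂ) : ℝ := maxEig (Aᴴ * A)

/-- `r(P,Q) = max_{j,k} ‖√P_j √Q_k‖_∞²`. -/
def rOverlap {ι κ : Type*} [Fintype ι] [Fintype κ]
    (P : ι → Matrix n n ℂ) (Q : κ → Matrix n n ℂ) : ℝ :=
  ⨆ j, ⨆ k, opNormSq (matSqrt (P j) * matSqrt (Q k))

/-- A density operator: positive semidefinite with unit trace. -/
def IsDensity (ρ : Matrix n n ℂ) : Prop := ρ.PosSemidef ∧ Matrix.trace ρ = 1

/-- A (finite) POVM. -/
def IsPOVM {ι : Type*} [Fintype ι] (P : ι → Matrix n n ℂ) : Prop :=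
  (∀ j, (P j).PosSemidef) ∧ ∑ j, P j = 1

/-- A rank-1 POVM: every element is of the form `|x⟩⟨x|`. -/
def IsRankOnePOVM {ι : Type*} [Fintype ι] (P : ι → Matrix n n ℂ) : Prop :=
  IsPOVM P ∧ ∀ j, ∃ x : n → ℂ, P j = Matrix.vecMulVec x (star x)

/-- The rank-one projector `|x⟩⟨x|` onto the vector `x`. -/
def projVec (x : n → ℂ) : Matrix n n ℂ := Matrix.vecMulVec x (star x)

/-- A family of unit vectors forming an orthonormal basis. -/
def IsONBasis (v : n → (n → ℂ)) : Prop :=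
  ∀ j k, (∑ i, (starRingEnd ℂ) (v j i) * v k i) = if j = k then 1 else 0

/-- Two bases are mutually unbiased. -/
def IsMU (v w : n → (n → ℂ)) : Prop :=
  ∀ j k, ‖∑ i, (starRingEnd ℂ) (v j i) * w k i‖ ^ 2 = 1 / (Fintype.card n : ℝ)

/-- A pure state (a rank-one density operator). -/
def IsPure (ρ : Matrix n n ℂ) : Prop :=
  ∃ ψ : n → ℂ, ρ = Matrix.vecMulVec ψ (star ψ)


/-- A projective decomposition of the identity: orthogonal projectors summing to `I`. -/
def IsProjDecomp {ι : Type*} [Fintype ι] (Pr : ι → Matrix n n ℂ) : Prop :=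
  (∀ j, (Pr j).IsHermitian ∧ Pr j * Pr j = Pr j) ∧ ∑ j, Pr j = 1

variable {α β γ : Type*} [Fintype α] [DecidableEq α] [Fintype β] [DecidableEq β]
  [Fintype γ] [DecidableEq γ]

/-- Partial trace over the first factor. -/
def ptrFst (ρ : Matrix (α × β) (α × β) ℂ) : Matrix β β ℂ :=
  Matrix.of fun j j' => ∑ i, ρ (i, j) (i, j')

/-- Partial trace over the second factor. -/
def ptrSnd (ρ : Matrix (α × β) (α × β) ℂ) : Matrix α α ℂ :=
  Matrix.of fun i i' => ∑ j, ρ (i, j) (i', j)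

/-- `Tr_a[(P ⊗ I) ρ_{ab}]`, the unnormalized conditional state on `b`. -/
def condB (P : Matrix α α ℂ) (ρab : Matrix (α × β) (α × β) ℂ) : Matrix β β ℂ :=
  ptrFst ((P ⊗ₖ (1 : Matrix β β ℂ)) * ρab)

/-- Probability of POVM element `P` on the `a` part of `ρ_{ab}`. -/
def probB (P : Matrix α α ℂ) (ρab : Matrix (α × β) (α × β) ℂ) : ℝ :=
  (Matrix.trace ((P ⊗ₖ (1 : Matrix β β ℂ)) * ρab)).re

/-- Holevo quantity `χ(P, b) = S(ρ_b) - ∑_j p_j S(ρ_{bj})`. -/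
def holevo {ι : Type*} [Fintype ι] (P : ι → Matrix α α ℂ)
    (ρab : Matrix (α × β) (α × β) ℂ) : ℝ :=
  vN (ptrFst ρab) -
    ∑ j, probB (P j) ρab * vN ((probB (P j) ρab)⁻¹ • condB (P j) ρab)

/-- Missing information `H(P|b) = H({p_j}) - χ(P, b)`. -/
def missing {ι : Type*} [Fintype ι] (P : ι → Matrix α α ℂ)
    (ρab : Matrix (α × β) (α × β) ℂ) : ℝ :=
  shannon (fun j => probB (P j) ρab) - holevo P ρab

/-- Tripartite reduction `ρ_{ab}` from `ρ_{abc}` (indices `α × β × γ`). -/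
def redAB (ρ : Matrix (α × β × γ) (α × β × γ) ℂ) : Matrix (α × β) (α × β) ℂ :=
  Matrix.of fun x y => ∑ k, ρ (x.1, x.2, k) (y.1, y.2, k)

/-- Tripartite reduction `ρ_{ac}` from `ρ_{abc}`. -/
def redAC (ρ : Matrix (α × β × γ) (α × β × γ) ℂ) : Matrix (α × γ) (α × γ) ℂ :=
  Matrix.of fun x y => ∑ j, ρ (x.1, j, x.2) (y.1, j, y.2)

/-- Tripartite reduction `ρ_a`. -/
def redA (ρ : Matrix (α × β × γ) (α × β × γ) ℂ) : Matrix α α ℂ :=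
  ptrSnd (redAB ρ)

/-- Tripartite reduction `ρ_b`. -/
def redB (ρ : Matrix (α × β × γ) (α × β × γ) ℂ) : Matrix β β ℂ :=
  ptrFst (redAB ρ)

/-- Tripartite reduction `ρ_c`. -/
def redC (ρ : Matrix (α × β × γ) (α × β × γ) ℂ) : Matrix γ γ ℂ :=
  ptrFst (redAC ρ)


section Helpers

lemma matFun_eq (f : ℝ → ℝ) {A : Matrix n n ℂ} (h : A.IsHermitian) :
    matFun f A = (h.eigenvectorUnitary : Matrix n n ℂ) *
      Matrix.diagonal (fun i => (f (h.eigenvalues i) : ℂ)) *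
      (star (h.eigenvectorUnitary : Matrix n n ℂ)) := by
  rw [matFun, dif_pos h]

lemma trace_conj_diag (U : Matrix n n ℂ) (hU : star U * U = 1) (d e : n → ℂ) :
    Matrix.trace (U * Matrix.diagonal d * star U * (U * Matrix.diagonal e * star U))
      = ∑ i, d i * e i := by
  have h1 : star U * (U * (Matrix.diagonal e * star U)) = Matrix.diagonal e * star U := by
    rw [← Matrix.mul_assoc, hU, Matrix.one_mul]
  have h2 : U * Matrix.diagonal d * star U * (U * Matrix.diagonal e * star U)
      = U * (Matrix.diagonal d * Matrix.diagonal e) * star U := by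
    simp only [Matrix.mul_assoc, h1]
  rw [h2, Matrix.trace_mul_cycle, ← Matrix.mul_assoc, hU, Matrix.one_mul,
    Matrix.diagonal_mul_diagonal, Matrix.trace_diagonal]

lemma trace_mul_matFun (f : ℝ → ℝ) {A : Matrix n n ℂ} (h : A.IsHermitian) :
    Matrix.trace (A * matFun f A)
      = ∑ i, (h.eigenvalues i : ℂ) * (f (h.eigenvalues i) : ℂ) := by
  have hU : star (h.eigenvectorUnitary : Matrix n n ℂ) * (h.eigenvectorUnitary : Matrix n n ℂ)
      = 1 := Unitary.coe_star_mul_self h.eigenvectorUnitary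
  calc Matrix.trace (A * matFun f A)
      = Matrix.trace (((h.eigenvectorUnitary : Matrix n n ℂ) *
          Matrix.diagonal (RCLike.ofReal ∘ h.eigenvalues) *
          (star (h.eigenvectorUnitary : Matrix n n ℂ))) * matFun f A) :=
        congrArg (fun M => Matrix.trace (M * matFun f A)) h.spectral_theorem
    _ = ∑ i, (h.eigenvalues i : ℂ) * (f (h.eigenvalues i) : ℂ) := by
        rw [matFun_eq f h, trace_conj_diag _ hU]
        rfl

lemma trace_eq_sum_eigen {A : Matrix n n ℂ} (h : A.IsHermitian) :
    Matrix.trace A = ∑ i, (h.eigenvalues i : ℂ) := by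
  have hU : star (h.eigenvectorUnitary : Matrix n n ℂ) * (h.eigenvectorUnitary : Matrix n n ℂ)
      = 1 := Unitary.coe_star_mul_self h.eigenvectorUnitary
  calc Matrix.trace A
      = Matrix.trace ((h.eigenvectorUnitary : Matrix n n ℂ) *
          Matrix.diagonal (RCLike.ofReal ∘ h.eigenvalues) *
          (star (h.eigenvectorUnitary : Matrix n n ℂ))) :=
        congrArg Matrix.trace h.spectral_theorem
    _ = ∑ i, (h.eigenvalues i : ℂ) := by
        rw [Matrix.trace_mul_cycle, hU, Matrix.one_mul, Matrix.trace_diagonal]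
        rfl

lemma matSqrt_sq {A : Matrix n n ℂ} (hA : A.PosSemidef) :
    matSqrt A * matSqrt A = A := by
  show matFun Real.sqrt A * matFun Real.sqrt A = A
  have h := hA.1
  have hU : star (h.eigenvectorUnitary : Matrix n n ℂ) * (h.eigenvectorUnitary : Matrix n n ℂ)
      = 1 := Unitary.coe_star_mul_self h.eigenvectorUnitary
  rw [matFun_eq Real.sqrt h]
  have h1 : star (h.eigenvectorUnitary : Matrix n n ℂ) *
      ((h.eigenvectorUnitary : Matrix n n ℂ) *
        (Matrix.diagonal (fun i => (Real.sqrt (h.eigenvalues i) : ℂ)) *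
          star (h.eigenvectorUnitary : Matrix n n ℂ)))
      = Matrix.diagonal (fun i => (Real.sqrt (h.eigenvalues i) : ℂ)) *
          star (h.eigenvectorUnitary : Matrix n n ℂ) := by
    rw [← Matrix.mul_assoc, hU, Matrix.one_mul]
  calc ((h.eigenvectorUnitary : Matrix n n ℂ) *
        Matrix.diagonal (fun i => (Real.sqrt (h.eigenvalues i) : ℂ)) *
        star (h.eigenvectorUnitary : Matrix n n ℂ)) *
      ((h.eigenvectorUnitary : Matrix n n ℂ) *
        Matrix.diagonal (fun i => (Real.sqrt (h.eigenvalues i) : ℂ)) *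
        star (h.eigenvectorUnitary : Matrix n n ℂ))
      = (h.eigenvectorUnitary : Matrix n n ℂ) *
        (Matrix.diagonal (fun i => (Real.sqrt (h.eigenvalues i) : ℂ)) *
          Matrix.diagonal (fun i => (Real.sqrt (h.eigenvalues i) : ℂ))) *
        star (h.eigenvectorUnitary : Matrix n n ℂ) := by
        simp only [Matrix.mul_assoc, h1]
    _ = A := by
        rw [Matrix.diagonal_mul_diagonal]
        have he : (fun i => (Real.sqrt (h.eigenvalues i) : ℂ) * (Real.sqrt (h.eigenvalues i) : ℂ))
            = RCLike.ofReal ∘ h.eigenvalues := by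
          funext i
          rw [← Complex.ofReal_mul, Real.mul_self_sqrt (hA.eigenvalues_nonneg i)]
          rfl
        rw [he]; exact h.spectral_theorem.symm

lemma star_vecMul_eq (U : Matrix n n ℂ) (u : n → ℂ) :
    star u ᵥ* U = star (star U *ᵥ u) := by
  rw [Matrix.star_mulVec, Matrix.star_eq_conjTranspose, Matrix.conjTranspose_conjTranspose]

lemma quad_eigen {A : Matrix n n ℂ} (h : A.IsHermitian) (u : n → ℂ) :
    star u ⬝ᵥ (A *ᵥ u) = ∑ m, (h.eigenvalues m : ℂ) *
      (Complex.normSq ((star (h.eigenvectorUnitary : Matrix n n ℂ) *ᵥ u) m) : ℂ) := by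
  set U := (h.eigenvectorUnitary : Matrix n n ℂ) with hUdef
  set w := star U *ᵥ u with hw
  calc star u ⬝ᵥ (A *ᵥ u)
      = star u ⬝ᵥ ((U * Matrix.diagonal (RCLike.ofReal ∘ h.eigenvalues) * star U) *ᵥ u) :=
        congrArg (fun M => star u ⬝ᵥ (M *ᵥ u)) h.spectral_theorem
    _ = star w ⬝ᵥ (Matrix.diagonal (RCLike.ofReal ∘ h.eigenvalues) *ᵥ w) := by
        rw [← Matrix.mulVec_mulVec, ← Matrix.mulVec_mulVec, Matrix.dotProduct_mulVec,
          star_vecMul_eq]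
    _ = ∑ m, (h.eigenvalues m : ℂ) * (Complex.normSq (w m) : ℂ) := by
        simp only [dotProduct, Matrix.mulVec_diagonal, Pi.star_apply,
          Function.comp_apply]
        refine Finset.sum_congr rfl fun m _ => ?_
        rw [Complex.normSq_eq_conj_mul_self]
        show (starRingEnd ℂ) (w m) * ((h.eigenvalues m : ℂ) * w m)
          = (h.eigenvalues m : ℂ) * ((starRingEnd ℂ) (w m) * w m)
        ring

lemma sum_normSq_star_mulVec (U : Matrix n n ℂ) (hU : U * star U = 1) (u : n → ℂ) :
    ∑ m, Complex.normSq ((star U *ᵥ u) m) = ∑ i, Complex.normSq (u i) := by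
  have hC : ∑ m, (Complex.normSq ((star U *ᵥ u) m) : ℂ) = ∑ i, (Complex.normSq (u i) : ℂ) := by
    have h1 : ∑ m, (Complex.normSq ((star U *ᵥ u) m) : ℂ)
        = star (star U *ᵥ u) ⬝ᵥ (star U *ᵥ u) := by
      simp only [dotProduct, Pi.star_apply, Complex.normSq_eq_conj_mul_self]
      rfl
    rw [h1, ← star_vecMul_eq, ← Matrix.dotProduct_mulVec, Matrix.mulVec_mulVec, hU,
      Matrix.one_mulVec]
    simp only [dotProduct, Pi.star_apply, Complex.normSq_eq_conj_mul_self]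
    rfl
  have := congrArg Complex.re hC
  simpa using this

lemma vecMulVec_mulVec' (v w z : n → ℂ) :
    Matrix.vecMulVec v w *ᵥ z = (w ⬝ᵥ z) • v := by
  ext i
  simp [Matrix.mulVec, Matrix.vecMulVec_apply, dotProduct, Finset.sum_mul, Finset.mul_sum,
    mul_comm, mul_left_comm]

lemma trace_vecMulVec_mul (x : n → ℂ) (B : Matrix n n ℂ) :
    Matrix.trace (Matrix.vecMulVec x (star x) * B) = star x ⬝ᵥ (B *ᵥ x) := by
  simp only [Matrix.trace, Matrix.diag, Matrix.mul_apply, Matrix.vecMulVec_apply,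
    dotProduct, Matrix.mulVec, Pi.star_apply]
  rw [Finset.sum_comm]
  refine Finset.sum_congr rfl fun j _ => ?_
  rw [Finset.mul_sum]
  refine Finset.sum_congr rfl fun i _ => ?_
  ring

lemma sum_normSq_povm {ι : Type*} [Fintype ι] (U : Matrix n n ℂ) (hU : star U * U = 1)
    (x : ι → n → ℂ) (hsum : ∑ j, Matrix.vecMulVec (x j) (star (x j)) = 1) (m : n) :
    ∑ j, Complex.normSq ((star U *ᵥ x j) m) = 1 := by
  set c : n → ℂ := fun a => U a m with hc
  have hwm : ∀ j, (star U *ᵥ x j) m = star c ⬝ᵥ x j := by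
    intro j
    simp only [Matrix.mulVec, dotProduct, Matrix.star_apply, Pi.star_apply, hc]
  have key : ∀ j, (Complex.normSq ((star U *ᵥ x j) m) : ℂ)
      = star c ⬝ᵥ (Matrix.vecMulVec (x j) (star (x j)) *ᵥ c) := by
    intro j
    rw [vecMulVec_mulVec', dotProduct_smul, hwm j, Complex.normSq_eq_conj_mul_self]
    rw [smul_eq_mul]
    have h1 : (starRingEnd ℂ) (star c ⬝ᵥ x j) = star (x j) ⬝ᵥ c := by
      rw [Matrix.star_dotProduct, ← Complex.star_def, star_star]
    rw [h1]
  have hsumC : ∑ j, (Complex.normSq ((star U *ᵥ x j) m) : ℂ) = 1 := by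
    have h2 : ∑ j, star c ⬝ᵥ (Matrix.vecMulVec (x j) (star (x j)) *ᵥ c)
        = star c ⬝ᵥ ((∑ j, Matrix.vecMulVec (x j) (star (x j))) *ᵥ c) := by
      simp only [Matrix.mulVec, dotProduct, Matrix.sum_apply, Finset.sum_mul,
        Finset.mul_sum]
      rw [Finset.sum_comm]
      refine Finset.sum_congr rfl fun i _ => ?_
      rw [Finset.sum_comm]
    have h3 : star c ⬝ᵥ c = (1 : Matrix n n ℂ) m m := by
      rw [← hU]
      simp only [Matrix.mul_apply, dotProduct, Matrix.star_apply, Pi.star_apply, hc]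
    calc ∑ j, (Complex.normSq ((star U *ᵥ x j) m) : ℂ)
        = ∑ j, star c ⬝ᵥ (Matrix.vecMulVec (x j) (star (x j)) *ᵥ c) :=
          Finset.sum_congr rfl fun j _ => key j
      _ = star c ⬝ᵥ ((∑ j, Matrix.vecMulVec (x j) (star (x j))) *ᵥ c) := h2
      _ = star c ⬝ᵥ c := by rw [hsum, Matrix.one_mulVec]
      _ = 1 := by rw [h3, Matrix.one_apply_eq]
  have := congrArg Complex.re hsumC
  simpa using this

lemma rayleigh_le_maxEig [Nonempty n] {A : Matrix n n ℂ} (h : A.IsHermitian) (u : n → ℂ) :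
    (star u ⬝ᵥ (A *ᵥ u)).re ≤ maxEig A * ∑ i, Complex.normSq (u i) := by
  rw [maxEig, dif_pos h, quad_eigen h u]
  set w := star (h.eigenvectorUnitary : Matrix n n ℂ) *ᵥ u with hw
  have hre : (∑ m, (h.eigenvalues m : ℂ) * (Complex.normSq (w m) : ℂ)).re
      = ∑ m, h.eigenvalues m * Complex.normSq (w m) := by
    rw [Complex.re_sum]
    refine Finset.sum_congr rfl fun m _ => ?_
    rw [← Complex.ofReal_mul, Complex.ofReal_re]
  rw [hre]
  have hU2 : (h.eigenvectorUnitary : Matrix n n ℂ) * star (h.eigenvectorUnitary : Matrix n n ℂ)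
      = 1 := Matrix.mem_unitaryGroup_iff.mp h.eigenvectorUnitary.2
  have hwsum : ∑ m, Complex.normSq (w m) = ∑ i, Complex.normSq (u i) :=
    sum_normSq_star_mulVec _ hU2 u
  calc ∑ m, h.eigenvalues m * Complex.normSq (w m)
      ≤ ∑ m, (⨆ i, h.eigenvalues i) * Complex.normSq (w m) :=
        Finset.sum_le_sum fun m _ => mul_le_mul_of_nonneg_right
          (le_ciSup (Set.finite_range _).bddAbove m) (Complex.normSq_nonneg _)
    _ = (⨆ i, h.eigenvalues i) * ∑ i, Complex.normSq (u i) := by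
        rw [← Finset.mul_sum, hwsum]

lemma scalar_key {m : Type*} [Fintype m] (lam t : m → ℝ) (hlam : ∀ i, 0 ≤ lam i)
    (ht : ∀ i, 0 ≤ t i) (c : ℝ) (hc : 0 < c) (hsc : ∑ i, t i ≤ c) :
    (∑ i, lam i * t i) * Real.log (∑ i, lam i * t i) ≤
      (∑ i, (lam i * t i) * Real.log (lam i)) + (∑ i, lam i * t i) * Real.log c := by
  set p := ∑ i, lam i * t i with hp
  have hp0 : 0 ≤ p := Finset.sum_nonneg fun i _ => mul_nonneg (hlam i) (ht i)
  by_cases hs0 : ∑ i, t i = 0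
  · have ht0 : ∀ i ∈ Finset.univ, t i = 0 :=
      (Finset.sum_eq_zero_iff_of_nonneg (fun i _ => ht i)).mp hs0
    have hpz : p = 0 := by
      rw [hp]
      exact Finset.sum_eq_zero fun i hi => by rw [ht0 i hi, mul_zero]
    have hterm : ∀ i ∈ Finset.univ, (lam i * t i) * Real.log (lam i) = 0 := fun i hi => by
      rw [ht0 i hi, mul_zero, zero_mul]
    rw [hpz, Finset.sum_eq_zero hterm]
    simp
  have hspos : 0 < ∑ i, t i :=
    lt_of_le_of_ne (Finset.sum_nonneg fun i _ => ht i) (Ne.symm hs0)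
  set s := ∑ i, t i with hsdef
  by_cases hpz : p = 0
  · have hpz' : ∑ i, lam i * t i = 0 := by rw [← hp]; exact hpz
    have hterm : ∀ i ∈ Finset.univ, lam i * t i = 0 :=
      (Finset.sum_eq_zero_iff_of_nonneg (fun i _ => mul_nonneg (hlam i) (ht i))).mp hpz'
    have hz : ∀ i ∈ Finset.univ, (lam i * t i) * Real.log (lam i) = 0 := fun i hi => by
      rw [hterm i hi, zero_mul]
    rw [hpz, Finset.sum_eq_zero hz]
    simp
  have hppos : 0 < p := lt_of_le_of_ne hp0 (Ne.symm hpz)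
  have hjen := Real.convexOn_mul_log.map_sum_le (t := Finset.univ) (w := fun i => t i / s)
    (p := lam) (fun i _ => div_nonneg (ht i) hspos.le)
    (by rw [← Finset.sum_div, div_self hspos.ne'])
    (fun i _ => hlam i)
  have hsum1 : ∑ i, (t i / s) • lam i = p / s := by
    rw [hp, Finset.sum_div]
    refine Finset.sum_congr rfl fun i _ => ?_
    rw [smul_eq_mul]
    field_simp
  rw [hsum1] at hjen
  have hmul := mul_le_mul_of_nonneg_left hjen hspos.le
  have hL : s * (p / s * Real.log (p / s)) = p * Real.log (p / s) := by
    field_simp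
  have hR : s * ∑ i, (t i / s) • (lam i * Real.log (lam i))
      = ∑ i, (lam i * t i) * Real.log (lam i) := by
    rw [Finset.mul_sum]
    refine Finset.sum_congr rfl fun i _ => ?_
    rw [smul_eq_mul]
    field_simp
  rw [hL, hR] at hmul
  have hlog : Real.log (p / s) = Real.log p - Real.log s := Real.log_div hppos.ne' hspos.ne'
  rw [hlog, mul_sub] at hmul
  have hlast : p * Real.log s ≤ p * Real.log c :=
    mul_le_mul_of_nonneg_left (Real.log_le_log hspos hsc) hp0
  linarith

end Helpers

end
/-- single rank-1 POVM uncertainty relation for mixed states: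
`H(N) ≥ log[1/√r(N,N)] + S(ρ)`. -/
theorem uncertainty_single_rank_one_povm {α ι : Type*}
    [Fintype α] [DecidableEq α] [Fintype ι]
    (ρ : Matrix α α ℂ) (hρ : IsDensity ρ)
    (N : ι → Matrix α α ℂ) (hN : IsRankOnePOVM N) :
    shannon (fun j => (Matrix.trace (N j * ρ)).re) ≥
      Real.log (1 / Real.sqrt (rOverlap N N)) + vN ρ := by
  classical
  obtain ⟨⟨hNpos, hNsum⟩, hrk⟩ := hN
  choose x hx using hrk
  have hαne : Nonempty α := by
    by_contra hne
    have : IsEmpty α := not_nonempty_iff.mp hne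
    have h0 : Matrix.trace ρ = 0 := by simp [Matrix.trace]
    rw [hρ.2] at h0
    exact one_ne_zero h0
  haveI := hαne
  have hιne : Nonempty ι := by
    by_contra hne
    have : IsEmpty ι := not_nonempty_iff.mp hne
    have h0 : (0 : Matrix α α ℂ) = 1 := by rw [← hNsum]; simp
    obtain ⟨a⟩ := hαne
    have h1 : (0 : Matrix α α ℂ) a a = (1 : Matrix α α ℂ) a a := by rw [h0]
    rw [Matrix.zero_apply, Matrix.one_apply_eq] at h1
    exact zero_ne_one h1
  haveI := hιne
  have h : ρ.IsHermitian := hρ.1.1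
  set lam := h.eigenvalues with hlamdef
  set U := (h.eigenvectorUnitary : Matrix α α ℂ) with hUdef
  have hU1 : star U * U = 1 := Unitary.coe_star_mul_self h.eigenvectorUnitary
  have hU2 : U * star U = 1 := Matrix.mem_unitaryGroup_iff.mp h.eigenvectorUnitary.2
  have hlam0 : ∀ m, 0 ≤ lam m := hρ.1.eigenvalues_nonneg
  set t : ι → α → ℝ := fun j m => Complex.normSq ((star U *ᵥ x j) m) with htdef
  set P : ι → ℝ := fun j => (Matrix.trace (N j * ρ)).re with hPdef
  have ht0 : ∀ j m, 0 ≤ t j m := fun j m => Complex.normSq_nonneg _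
  have hp : ∀ j, P j = ∑ m, lam m * t j m := by
    intro j
    have h1 : Matrix.trace (N j * ρ) = star (x j) ⬝ᵥ (ρ *ᵥ x j) := by
      rw [hx j]; exact trace_vecMulVec_mul _ _
    show (Matrix.trace (N j * ρ)).re = _
    rw [h1, quad_eigen h (x j), Complex.re_sum]
    refine Finset.sum_congr rfl fun m _ => ?_
    rw [← Complex.ofReal_mul, Complex.ofReal_re]
  have ht1 : ∀ m, ∑ j, t j m = 1 := by
    intro m
    exact sum_normSq_povm U hU1 x
      (by rw [← hNsum]; exact Finset.sum_congr rfl fun j _ => (hx j).symm) m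
  set s : ι → ℝ := fun j => ∑ a, Complex.normSq (x j a) with hsdef
  have hs : ∀ j, ∑ m, t j m = s j := fun j => sum_normSq_star_mulVec U hU2 (x j)
  have hlamsum : ∑ m, lam m = 1 := by
    have h1 : (∑ m, (lam m : ℂ)) = 1 := by rw [← trace_eq_sum_eigen h, hρ.2]
    have h2 := congrArg Complex.re h1
    rw [Complex.re_sum] at h2
    simpa using h2
  have hvN : vN ρ = -∑ m, lam m * Real.log (lam m) := by
    have h1 : Matrix.trace (ρ * matLog ρ) = ∑ m, (lam m : ℂ) * (Real.log (lam m) : ℂ) :=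
      trace_mul_matFun Real.log h
    show -(Matrix.trace (ρ * matLog ρ)).re = _
    rw [h1, Complex.re_sum]
    congr 1
    refine Finset.sum_congr rfl fun m _ => ?_
    rw [← Complex.ofReal_mul, Complex.ofReal_re]
  obtain ⟨j₀, -, hj₀⟩ := Finset.exists_max_image Finset.univ s Finset.univ_nonempty
  set c := s j₀ with hcdef
  have hcmax : ∀ j, s j ≤ c := fun j => hj₀ j (Finset.mem_univ j)
  have hcpos : 0 < c := by
    have h1 : ∑ j, s j = (Fintype.card α : ℝ) := by
      rw [show ∑ j, s j = ∑ j, ∑ m, t j m from (Finset.sum_congr rfl fun j _ => (hs j).symm),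
        Finset.sum_comm]
      simp [ht1]
    have h2 : (0:ℝ) < ∑ j, s j := by
      rw [h1]; exact_mod_cast Fintype.card_pos
    by_contra hcn
    push_neg at hcn
    have h3 : ∑ j, s j ≤ 0 := Finset.sum_nonpos fun j _ => le_trans (hcmax j) hcn
    linarith
  have hNherm : (N j₀).IsHermitian := (hNpos j₀).1
  have hrge : c ^ 2 ≤ rOverlap N N := by
    have hsq : matSqrt (N j₀) * matSqrt (N j₀) = N j₀ := matSqrt_sq (hNpos j₀)
    have hherm2 : (N j₀ * N j₀).IsHermitian := by
      show (N j₀ * N j₀)ᴴ = N j₀ * N j₀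
      rw [Matrix.conjTranspose_mul, hNherm.eq]
    have hray := rayleigh_le_maxEig hherm2 (x j₀)
    have hxc : star (x j₀) ⬝ᵥ x j₀ = ((s j₀ : ℝ) : ℂ) := by
      have he : ((s j₀ : ℝ) : ℂ) = ∑ a, (Complex.normSq (x j₀ a) : ℂ) := by
        rw [hsdef]; push_cast; rfl
      rw [he]
      simp only [dotProduct, Pi.star_apply, Complex.star_def,
        Complex.normSq_eq_conj_mul_self]
    have hNx : N j₀ *ᵥ x j₀ = ((s j₀ : ℝ) : ℂ) • x j₀ := by
      rw [hx j₀, vecMulVec_mulVec', hxc]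
    have hNNx : (N j₀ * N j₀) *ᵥ x j₀ = (((s j₀ : ℝ) : ℂ) * ((s j₀ : ℝ) : ℂ)) • x j₀ := by
      rw [← Matrix.mulVec_mulVec, hNx, Matrix.mulVec_smul, hNx, smul_smul]
    have hlhs : (star (x j₀) ⬝ᵥ ((N j₀ * N j₀) *ᵥ x j₀)).re = s j₀ * s j₀ * s j₀ := by
      rw [hNNx, dotProduct_smul, hxc, smul_eq_mul, ← Complex.ofReal_mul,
        ← Complex.ofReal_mul, Complex.ofReal_re]
    rw [hlhs] at hray
    have hsx : ∑ i, Complex.normSq (x j₀ i) = s j₀ := rfl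
    rw [hsx] at hray
    have hmain : c * c ≤ maxEig (N j₀ * N j₀) := by
      rw [← hcdef] at hray
      nlinarith [hray, hcpos]
    have hstep : opNormSq (matSqrt (N j₀) * matSqrt (N j₀)) = maxEig (N j₀ * N j₀) := by
      rw [hsq]
      show maxEig ((N j₀)ᴴ * N j₀) = _
      rw [hNherm.eq]
    calc c ^ 2 = c * c := sq c
      _ ≤ maxEig (N j₀ * N j₀) := hmain
      _ = opNormSq (matSqrt (N j₀) * matSqrt (N j₀)) := hstep.symm
      _ ≤ ⨆ k, opNormSq (matSqrt (N j₀) * matSqrt (N k)) :=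
          le_ciSup (f := fun k => opNormSq (matSqrt (N j₀) * matSqrt (N k)))
            (Set.finite_range _).bddAbove j₀
      _ ≤ rOverlap N N := by
          exact le_ciSup (f := fun j => ⨆ k, opNormSq (matSqrt (N j) * matSqrt (N k)))
            (Set.finite_range _).bddAbove j₀
  have hkey : ∀ j, P j * Real.log (P j) ≤
      (∑ m, (lam m * t j m) * Real.log (lam m)) + P j * Real.log c := by
    intro j
    have hsk := scalar_key lam (t j) hlam0 (ht0 j) c hcpos (by rw [hs j]; exact hcmax j)
    rw [← hp j] at hsk
    exact hsk
  have hPsum : ∑ j, P j = 1 := by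
    calc ∑ j, P j = ∑ j, ∑ m, lam m * t j m := Finset.sum_congr rfl fun j _ => hp j
      _ = ∑ m, ∑ j, lam m * t j m := Finset.sum_comm
      _ = ∑ m, lam m := by
          refine Finset.sum_congr rfl fun m _ => ?_
          rw [← Finset.mul_sum, ht1 m, mul_one]
      _ = 1 := hlamsum
  have hsum_bound : ∑ j, P j * Real.log (P j)
      ≤ (∑ m, lam m * Real.log (lam m)) + Real.log c := by
    calc ∑ j, P j * Real.log (P j)
        ≤ ∑ j, ((∑ m, (lam m * t j m) * Real.log (lam m)) + P j * Real.log c) :=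
          Finset.sum_le_sum fun j _ => hkey j
      _ = (∑ j, ∑ m, (lam m * t j m) * Real.log (lam m)) + (∑ j, P j) * Real.log c := by
          rw [Finset.sum_add_distrib, ← Finset.sum_mul]
      _ = (∑ m, lam m * Real.log (lam m)) + Real.log c := by
          rw [hPsum, one_mul]
          congr 1
          rw [Finset.sum_comm]
          refine Finset.sum_congr rfl fun m _ => ?_
          calc ∑ j, (lam m * t j m) * Real.log (lam m)
              = (lam m * Real.log (lam m)) * ∑ j, t j m := by
                rw [Finset.mul_sum]
                exact Finset.sum_congr rfl fun j _ => by ring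
            _ = lam m * Real.log (lam m) := by rw [ht1 m, mul_one]
  rw [ge_iff_le]
  have hlog : Real.log (1 / Real.sqrt (rOverlap N N)) ≤ -Real.log c := by
    have h1 : c ≤ Real.sqrt (rOverlap N N) := by
      have h2 := Real.sqrt_le_sqrt hrge
      rwa [Real.sqrt_sq hcpos.le] at h2
    rw [one_div, Real.log_inv]
    exact neg_le_neg (Real.log_le_log hcpos h1)
  calc Real.log (1 / Real.sqrt (rOverlap N N)) + vN ρ
      ≤ -Real.log c + -∑ m, lam m * Real.log (lam m) := add_le_add hlog hvN.le
    _ ≤ -∑ j, P j * Real.log (P j) := by linarith [hsum_bound]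
    _ = shannon P := rfl
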